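/- Let K be an algebraically closed valued field and F a nonzero polynomial over K in one variable. If a ∈ K^× is a root of F then v(a) is a tropical zero of F. -/

import Mathlib

noncomputable section
open scoped Classical

/-- A valued field `(K, v)` with value group `Γ` (additive, `v 0 = ⊤`). -/
structure VF (K : Type*) [Field K] (Γ : Type*) [AddCommGroup Γ] [LinearOrder Γ] [IsOrderedAddMonoid Γ] where
  v : K → WithTop Γ
  v_eq_top_iff : ∀ x : K, v x = ⊤ ↔ x = 0
  v_one : v 1 = 0
  v_mul : ∀ x y : K, v (x * y) = v x + v y
  v_neg : ∀ x : K, v (-x) = v x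
  v_add : ∀ x y : K, min (v x) (v y) ≤ v (x + y)

namespace VF

variable {K : Type*} [Field K] {Γ : Type*} [AddCommGroup Γ] [LinearOrder Γ] [IsOrderedAddMonoid Γ]

/-- The tropicalization `F_v(γ) = min_i (v (a_i) + i γ)` of a one-variable polynomial
`F = Σ_i a_i x^i` (minimum over indices with `a_i ≠ 0`). -/
def Fv1 (V : VF K Γ) (F : Polynomial K) (γ : Γ) : WithTop Γ :=
  F.support.inf fun i => V.v (F.coeff i) + ((i • γ : Γ) : WithTop Γ)

/-- `γ` is a tropical zero of `F`: the minimum `F_v(γ)` is attained at two distinct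
indices. -/
def TropZero (V : VF K Γ) (F : Polynomial K) (γ : Γ) : Prop :=
  ∃ i ∈ F.support, ∃ j ∈ F.support, i ≠ j ∧
    V.v (F.coeff i) + ((i • γ : Γ) : WithTop Γ) = V.Fv1 F γ ∧
    V.v (F.coeff j) + ((j • γ : Γ) : WithTop Γ) = V.Fv1 F γ

/-- The valuation is nontrivial. -/
def Nontriv (V : VF K Γ) : Prop := ∃ x : K, x ≠ 0 ∧ V.v x ≠ 0

end VF

namespace VF

variable {K : Type*} [Field K] {Γ : Type*} [AddCommGroup Γ] [LinearOrder Γ] [IsOrderedAddMonoid Γ]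

lemma v_zero (V : VF K Γ) : V.v 0 = ⊤ := (V.v_eq_top_iff 0).mpr rfl

lemma v_pow (V : VF K Γ) {a : K} {γ : Γ} (h : V.v a = (γ : WithTop Γ)) (n : ℕ) :
    V.v (a ^ n) = ((n • γ : Γ) : WithTop Γ) := by
  induction n with
  | zero => simpa using V.v_one
  | succ n ih =>
      rw [pow_succ, V.v_mul, ih, h, succ_nsmul]
      exact_mod_cast rfl

lemma v_sum_ge (V : VF K Γ) {ι : Type*} (s : Finset ι) (f : ι → K) :
    s.inf (fun i => V.v (f i)) ≤ V.v (∑ i ∈ s, f i) := by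
  classical
  induction s using Finset.induction_on with
  | empty => simp [V.v_zero]
  | insert i s hx ih =>
      rw [Finset.sum_insert hx, Finset.inf_insert]
      exact le_trans (min_le_min le_rfl ih) (V.v_add _ _)

lemma v_add_eq_left (V : VF K Γ) {x y : K} (h : V.v x < V.v y) :
    V.v (x + y) = V.v x := by
  refine le_antisymm ?_ ?_
  · have hx : V.v x = V.v ((x + y) + (-y)) := by ring_nf
    have := V.v_add (x + y) (-y)
    rw [V.v_neg] at this
    rw [hx]
    refine le_trans ?_ this
    rcases le_or_gt (V.v (x + y)) (V.v y) with h' | h'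
    · simp [min_eq_left h']
    · exfalso
      have h2 := V.v_add (x + y) (-y)
      rw [V.v_neg, min_eq_right h'.le] at h2
      rw [← hx] at h2
      exact absurd (lt_of_lt_of_le h h2) (lt_irrefl _)
  · have := V.v_add x y
    rwa [min_eq_left h.le] at this

end VF

/-- over an algebraically closed valued field, if `a ∈ K^×` is a root of
the nonzero polynomial `F`, then `v a` is a tropical zero of `F`. -/
theorem stmt15 {K : Type*} [Field K] [IsAlgClosed K]
    {Γ : Type*} [AddCommGroup Γ] [LinearOrder Γ] [IsOrderedAddMonoid Γ]
    (V : VF K Γ) (F : Polynomial K) (hF : F ≠ 0) (a : K) (ha : a ≠ 0)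
    (hroot : Polynomial.eval a F = 0) :
    ∃ γ : Γ, V.v a = (γ : WithTop Γ) ∧ V.TropZero F γ := by
  classical
  -- v a is not ⊤
  have hva : V.v a ≠ ⊤ := fun h => ha ((V.v_eq_top_iff a).mp h)
  obtain ⟨γ, hγ⟩ : ∃ γ : Γ, V.v a = (γ : WithTop Γ) := by
    cases hvaval : V.v a with
    | top => exact absurd hvaval hva
    | coe γ => exact ⟨γ, rfl⟩
  refine ⟨γ, hγ, ?_⟩
  set f : ℕ → K := fun i => F.coeff i * a ^ i with hf
  have hterm : ∀ i, V.v (f i) = V.v (F.coeff i) + ((i • γ : Γ) : WithTop Γ) := by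
    intro i
    rw [hf]
    simp only
    rw [V.v_mul, V.v_pow hγ]
  -- support nonempty, inf attained
  have hsupp : F.support.Nonempty := Polynomial.nonempty_support_iff.mpr hF
  obtain ⟨i₀, hi₀, hinf⟩ := Finset.exists_mem_eq_inf F.support hsupp
    (fun i => V.v (F.coeff i) + ((i • γ : Γ) : WithTop Γ))
  have hFv : V.Fv1 F γ = V.v (F.coeff i₀) + ((i₀ • γ : Γ) : WithTop Γ) := hinf
  -- finiteness of the min
  have hci₀ : F.coeff i₀ ≠ 0 := Polynomial.mem_support_iff.mp hi₀
  have hvfin : V.v (f i₀) ≠ ⊤ := by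
    intro h
    have : f i₀ = 0 := (V.v_eq_top_iff _).mp h
    exact (mul_ne_zero hci₀ (pow_ne_zero _ ha)) this
  -- suppose no second index attains the min
  by_contra hcon
  have huniq : ∀ j ∈ F.support, j ≠ i₀ →
      V.v (F.coeff i₀) + ((i₀ • γ : Γ) : WithTop Γ) <
        V.v (F.coeff j) + ((j • γ : Γ) : WithTop Γ) := by
    intro j hj hji
    have hle : V.v (F.coeff i₀) + ((i₀ • γ : Γ) : WithTop Γ) ≤
        V.v (F.coeff j) + ((j • γ : Γ) : WithTop Γ) := by
      rw [← hinf]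
      exact Finset.inf_le hj
    rcases hle.lt_or_eq with h | h
    · exact h
    · exact absurd ⟨i₀, hi₀, j, hj, hji.symm, hFv.symm, by rw [← h, hFv]⟩ hcon
  -- rewrite eval as sum
  have heval : Polynomial.eval a F = ∑ i ∈ F.support, f i := by
    rw [Polynomial.eval_eq_sum, Polynomial.sum]
  have hsplit : (∑ i ∈ F.support, f i) = f i₀ + ∑ i ∈ F.support.erase i₀, f i := by
    rw [← Finset.add_sum_erase _ _ hi₀]
  -- v of the rest is strictly bigger
  have hrest : V.v (f i₀) < V.v (∑ i ∈ F.support.erase i₀, f i) := by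
    refine lt_of_lt_of_le ?_ (V.v_sum_ge _ f)
    rw [Finset.lt_inf_iff]
    · intro j hj
      rw [hterm, hterm]
      exact huniq j (Finset.mem_of_mem_erase hj) (Finset.ne_of_mem_erase hj)
    · exact lt_top_iff_ne_top.mpr hvfin
  have : V.v (Polynomial.eval a F) = V.v (f i₀) := by
    rw [heval, hsplit]
    exact V.v_add_eq_left hrest
  rw [hroot, V.v_zero] at this
  exact hvfin this.symm
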